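/- Let V : ℝ × ℝ → ℝ be a smooth function of (x,t) with V_xx(x,t) ≠ 0 for all (x,t), satisfying the evolution equation V_t = −1/V_xx. Define η : ℝ × ℝ → ℝ by η(x,t) = V_xxx / V_xx³ − 3·2^{−2/3} / V_xx − 2^{−1/3}·x. Then η satisfies the linearized equation ∂η/∂t = ( 1/V_xx² )·∂²η/∂x² at every point (x,t). -/

import Mathlib

/-- Partial derivative with respect to the first (space) variable. -/
noncomputable def pdx (f : ℝ × ℝ → ℝ) : ℝ × ℝ → ℝ :=
  fun p => deriv (fun x => f (x, p.2)) p.1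

/-- Partial derivative with respect to the second (time) variable. -/
noncomputable def pdt (f : ℝ × ℝ → ℝ) : ℝ × ℝ → ℝ :=
  fun p => deriv (fun t => f (p.1, t)) p.2

section helpers
variable {f : ℝ × ℝ → ℝ}

lemma hasDerivAt_pdx (hf : Differentiable ℝ f) (p : ℝ × ℝ) :
    HasDerivAt (fun x => f (x, p.2)) (pdx f p) p.1 := by
  have h1 : HasDerivAt (fun x : ℝ => (x, p.2)) ((1:ℝ), (0:ℝ)) p.1 :=
    (hasDerivAt_id p.1).prodMk (hasDerivAt_const _ _)
  have h2 : HasDerivAt (fun x : ℝ => f (x, p.2)) (fderiv ℝ f p ((1:ℝ),(0:ℝ))) p.1 :=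
    ((hf p).hasFDerivAt).comp_hasDerivAt p.1 h1
  have h3 : pdx f p = fderiv ℝ f p ((1:ℝ),(0:ℝ)) := h2.deriv
  rw [h3]; exact h2

lemma pdx_eq_fderiv (hf : Differentiable ℝ f) (p : ℝ × ℝ) :
    pdx f p = fderiv ℝ f p ((1:ℝ),(0:ℝ)) := by
  have h1 : HasDerivAt (fun x : ℝ => (x, p.2)) ((1:ℝ), (0:ℝ)) p.1 :=
    (hasDerivAt_id p.1).prodMk (hasDerivAt_const _ _)
  exact (((hf p).hasFDerivAt).comp_hasDerivAt p.1 h1).deriv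

lemma hasDerivAt_pdt (hf : Differentiable ℝ f) (p : ℝ × ℝ) :
    HasDerivAt (fun t => f (p.1, t)) (pdt f p) p.2 := by
  have h1 : HasDerivAt (fun t : ℝ => (p.1, t)) ((0:ℝ), (1:ℝ)) p.2 :=
    (hasDerivAt_const _ _).prodMk (hasDerivAt_id p.2)
  have h2 : HasDerivAt (fun t : ℝ => f (p.1, t)) (fderiv ℝ f p ((0:ℝ),(1:ℝ))) p.2 :=
    ((hf p).hasFDerivAt).comp_hasDerivAt p.2 h1
  have h3 : pdt f p = fderiv ℝ f p ((0:ℝ),(1:ℝ)) := h2.deriv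
  rw [h3]; exact h2

lemma pdt_eq_fderiv (hf : Differentiable ℝ f) (p : ℝ × ℝ) :
    pdt f p = fderiv ℝ f p ((0:ℝ),(1:ℝ)) := by
  have h1 : HasDerivAt (fun t : ℝ => (p.1, t)) ((0:ℝ), (1:ℝ)) p.2 :=
    (hasDerivAt_const _ _).prodMk (hasDerivAt_id p.2)
  exact (((hf p).hasFDerivAt).comp_hasDerivAt p.2 h1).deriv

lemma contDiff_pdx (hf : ContDiff ℝ (⊤:ℕ∞) f) : ContDiff ℝ (⊤:ℕ∞) (pdx f) := by
  have : pdx f = fun p => fderiv ℝ f p ((1:ℝ),(0:ℝ)) :=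
    funext (pdx_eq_fderiv (hf.differentiable (by simp)))
  rw [this]
  exact (hf.fderiv_right (by exact_mod_cast le_top)).clm_apply contDiff_const

lemma pdt_pdx_comm (hf : ContDiff ℝ (⊤:ℕ∞) f) : pdt (pdx f) = pdx (pdt f) := by
  have hdf : Differentiable ℝ f := hf.differentiable (by simp)
  have hf' : ContDiff ℝ (⊤:ℕ∞) (fderiv ℝ f) := hf.fderiv_right (by exact_mod_cast le_top)
  have hdf' : Differentiable ℝ (fderiv ℝ f) := hf'.differentiable (by simp)
  funext p
  have hsymm : ∀ v w : ℝ × ℝ, fderiv ℝ (fderiv ℝ f) p v w = fderiv ℝ (fderiv ℝ f) p w v :=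
    fun v w => second_derivative_symmetric (fun y => (hdf y).hasFDerivAt)
      ((hdf' p).hasFDerivAt) v w
  have key : ∀ v w : ℝ × ℝ, fderiv ℝ (fun q => fderiv ℝ f q w) p v
      = fderiv ℝ (fderiv ℝ f) p v w := by
    intro v w
    have h2 : HasFDerivAt (fun q => fderiv ℝ f q w)
        ((ContinuousLinearMap.apply ℝ ℝ w).comp (fderiv ℝ (fderiv ℝ f) p)) p :=
      (ContinuousLinearMap.apply ℝ ℝ w).hasFDerivAt.comp p ((hdf' p).hasFDerivAt)
    rw [h2.fderiv]; rfl
  have e1 : pdx f = fun q => fderiv ℝ f q ((1:ℝ),(0:ℝ)) := funext (pdx_eq_fderiv hdf)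
  have e2 : pdt f = fun q => fderiv ℝ f q ((0:ℝ),(1:ℝ)) := funext (pdt_eq_fderiv hdf)
  have d1 : Differentiable ℝ (fun q => fderiv ℝ f q ((1:ℝ),(0:ℝ))) :=
    (hf'.clm_apply contDiff_const).differentiable (by simp)
  have d2 : Differentiable ℝ (fun q => fderiv ℝ f q ((0:ℝ),(1:ℝ))) :=
    (hf'.clm_apply contDiff_const).differentiable (by simp)
  rw [e1, e2, pdt_eq_fderiv d1 p, pdx_eq_fderiv d2 p, key, key, hsymm]

end helpers

/-- Subcase 1.3b: for a solution of `V_t = −1/V_xx`, the function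
`η = V_xxx / V_xx³ − 3·2^{−2/3} / V_xx − 2^{−1/3} x` satisfies the linearized
(Lie–Bäcklund symmetry) equation. -/
theorem subcase13b_third_order_symmetry
    (V : ℝ × ℝ → ℝ) (hV : ContDiff ℝ (⊤ : ℕ∞) V)
    (hVxx : ∀ p : ℝ × ℝ, pdx (pdx V) p ≠ 0)
    (heq : ∀ p : ℝ × ℝ, pdt V p = -1 / pdx (pdx V) p)
    (η : ℝ × ℝ → ℝ)
    (hη : η = fun p =>
      pdx (pdx (pdx V)) p / (pdx (pdx V) p) ^ 3
        - 3 * (2 : ℝ) ^ (-(2 : ℝ) / 3) / pdx (pdx V) p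
        - (2 : ℝ) ^ (-(1 : ℝ) / 3) * p.1) :
    ∀ p : ℝ × ℝ, pdt η p = (1 / (pdx (pdx V) p) ^ 2) * pdx (pdx η) p := by
  subst hη
  intro p
  have hV1 : ContDiff ℝ (⊤:ℕ∞) (pdx V) := contDiff_pdx hV
  have hV2 : ContDiff ℝ (⊤:ℕ∞) (pdx (pdx V)) := contDiff_pdx hV1
  have hV3 : ContDiff ℝ (⊤:ℕ∞) (pdx (pdx (pdx V))) := contDiff_pdx hV2
  have hV4 : ContDiff ℝ (⊤:ℕ∞) (pdx (pdx (pdx (pdx V)))) := contDiff_pdx hV3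
  set c1 : ℝ := (2:ℝ) ^ (-(1:ℝ)/3) with hc1
  set c2 : ℝ := 3 * (2:ℝ) ^ (-(2:ℝ)/3) with hc2
  set W : ℝ × ℝ → ℝ := pdx (pdx V) with hWdef
  set W1 : ℝ × ℝ → ℝ := pdx W with hW1def
  set W2 : ℝ × ℝ → ℝ := pdx W1 with hW2def
  set W3 : ℝ × ℝ → ℝ := pdx W2 with hW3def
  have dW : Differentiable ℝ W := hV2.differentiable (by simp)
  have dW1 : Differentiable ℝ W1 := hV3.differentiable (by simp)
  have dW2 : Differentiable ℝ W2 := hV4.differentiable (by simp)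
  -- pdt V as a function
  have hPT : pdt V = fun q => -1 / W q := funext heq
  -- step 1 : pdx of -1/W
  have step1 : ∀ q : ℝ × ℝ, pdx (fun q => -1 / W q) q = W1 q / W q ^ 2 := by
    intro q
    have hA : HasDerivAt (fun x => W (x, q.2)) (W1 q) q.1 := hasDerivAt_pdx dW q
    have hx := (hasDerivAt_const q.1 (-1:ℝ)).div hA (hVxx q)
    have hval : pdx (fun q => -1 / W q) q
        = (0 * W q - (-1) * W1 q) / W q ^ 2 := hx.deriv
    rw [hval]; ring
  -- step 2 : pdx of W1/W^2
  have step2 : ∀ q : ℝ × ℝ, pdx (fun q => W1 q / W q ^ 2) q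
      = W2 q / W q ^ 2 - 2 * W1 q ^ 2 / W q ^ 3 := by
    intro q
    have hne : W q ≠ 0 := hVxx q
    have hA : HasDerivAt (fun x => W (x, q.2)) (W1 q) q.1 := hasDerivAt_pdx dW q
    have hB : HasDerivAt (fun x => W1 (x, q.2)) (W2 q) q.1 := hasDerivAt_pdx dW1 q
    have hx := hB.div (hA.pow 2) (pow_ne_zero 2 hne)
    have hval : pdx (fun q => W1 q / W q ^ 2) q
        = (W2 q * W q ^ 2 - W1 q * (((2:ℕ):ℝ) * W q ^ (2-1) * W1 q)) / (W q ^ 2) ^ 2 :=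
      hx.deriv
    rw [hval]
    push_cast
    field_simp
  -- step 3 : pdx of (W2/W^2 - 2*W1^2/W^3)
  have step3 : ∀ q : ℝ × ℝ, pdx (fun q => W2 q / W q ^ 2 - 2 * W1 q ^ 2 / W q ^ 3) q
      = W3 q / W q ^ 2 - 6 * W1 q * W2 q / W q ^ 3 + 6 * W1 q ^ 3 / W q ^ 4 := by
    intro q
    have hne : W q ≠ 0 := hVxx q
    have hA : HasDerivAt (fun x => W (x, q.2)) (W1 q) q.1 := hasDerivAt_pdx dW q
    have hB : HasDerivAt (fun x => W1 (x, q.2)) (W2 q) q.1 := hasDerivAt_pdx dW1 q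
    have hC : HasDerivAt (fun x => W2 (x, q.2)) (W3 q) q.1 := hasDerivAt_pdx dW2 q
    have hx := (hC.div (hA.pow 2) (pow_ne_zero 2 hne)).sub
      (((hB.pow 2).const_mul (2:ℝ)).div (hA.pow 3) (pow_ne_zero 3 hne))
    have hval : pdx (fun q => W2 q / W q ^ 2 - 2 * W1 q ^ 2 / W q ^ 3) q
        = (W3 q * W q ^ 2 - W2 q * (((2:ℕ):ℝ) * W q ^ (2-1) * W1 q)) / (W q ^ 2) ^ 2
          - ((2 * (((2:ℕ):ℝ) * W1 q ^ (2-1) * W2 q)) * W q ^ 3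
              - 2 * W1 q ^ 2 * (((3:ℕ):ℝ) * W q ^ (3-1) * W1 q)) / (W q ^ 3) ^ 2 :=
      hx.deriv
    rw [hval]
    push_cast
    field_simp
    ring
  -- time derivatives of W and W1 via Clairaut
  have comm2 : pdt W = pdx (pdt (pdx V)) := pdt_pdx_comm hV1
  have comm1 : pdt (pdx V) = pdx (pdt V) := pdt_pdx_comm hV
  have e1 : pdt W = pdx (pdx (fun q => -1 / W q)) := by rw [comm2, comm1, hPT]
  have hpdtW : ∀ q, pdt W q = W2 q / W q ^ 2 - 2 * W1 q ^ 2 / W q ^ 3 := by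
    intro q
    rw [e1, funext step1]
    exact step2 q
  have comm3 : pdt W1 = pdx (pdt W) := pdt_pdx_comm hV2
  have hpdtW1 : ∀ q, pdt W1 q
      = W3 q / W q ^ 2 - 6 * W1 q * W2 q / W q ^ 3 + 6 * W1 q ^ 3 / W q ^ 4 := by
    intro q
    rw [comm3, funext hpdtW]
    exact step3 q
  -- first space derivative of η
  have L1 : ∀ q : ℝ × ℝ, pdx (fun q => W1 q / W q ^ 3 - c2 / W q - c1 * q.1) q
      = W2 q / W q ^ 3 - 3 * W1 q ^ 2 / W q ^ 4 + c2 * W1 q / W q ^ 2 - c1 := by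
    intro q
    have hne : W q ≠ 0 := hVxx q
    have hA : HasDerivAt (fun x => W (x, q.2)) (W1 q) q.1 := hasDerivAt_pdx dW q
    have hB : HasDerivAt (fun x => W1 (x, q.2)) (W2 q) q.1 := hasDerivAt_pdx dW1 q
    have hx := ((hB.div (hA.pow 3) (pow_ne_zero 3 hne)).sub
        ((hasDerivAt_const q.1 c2).div hA hne)).sub
      ((hasDerivAt_id q.1).const_mul c1)
    have hval : pdx (fun q => W1 q / W q ^ 3 - c2 / W q - c1 * q.1) q
        = (W2 q * W q ^ 3 - W1 q * (((3:ℕ):ℝ) * W q ^ (3-1) * W1 q)) / (W q ^ 3) ^ 2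
          - (0 * W q - c2 * W1 q) / W q ^ 2 - c1 * 1 := hx.deriv
    rw [hval]
    push_cast
    field_simp
    ring
  -- second space derivative of η
  have L2 : pdx (fun q => W2 q / W q ^ 3 - 3 * W1 q ^ 2 / W q ^ 4 + c2 * W1 q / W q ^ 2 - c1) p
      = (W3 p * W p ^ 3 - W2 p * (((3:ℕ):ℝ) * W p ^ (3-1) * W1 p)) / (W p ^ 3) ^ 2
        - ((3 * (((2:ℕ):ℝ) * W1 p ^ (2-1) * W2 p)) * W p ^ 4
            - 3 * W1 p ^ 2 * (((4:ℕ):ℝ) * W p ^ (4-1) * W1 p)) / (W p ^ 4) ^ 2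
        + ((c2 * W2 p) * W p ^ 2 - c2 * W1 p * (((2:ℕ):ℝ) * W p ^ (2-1) * W1 p)) / (W p ^ 2) ^ 2
        - 0 := by
    have hne : W p ≠ 0 := hVxx p
    have hA : HasDerivAt (fun x => W (x, p.2)) (W1 p) p.1 := hasDerivAt_pdx dW p
    have hB : HasDerivAt (fun x => W1 (x, p.2)) (W2 p) p.1 := hasDerivAt_pdx dW1 p
    have hC : HasDerivAt (fun x => W2 (x, p.2)) (W3 p) p.1 := hasDerivAt_pdx dW2 p
    have hx := (((hC.div (hA.pow 3) (pow_ne_zero 3 hne)).sub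
        (((hB.pow 2).const_mul (3:ℝ)).div (hA.pow 4) (pow_ne_zero 4 hne))).add
        ((hB.const_mul c2).div (hA.pow 2) (pow_ne_zero 2 hne))).sub
      (hasDerivAt_const p.1 c1)
    exact hx.deriv
  -- time derivative of η (raw)
  have hTA : HasDerivAt (fun t => W (p.1, t)) (pdt W p) p.2 := hasDerivAt_pdt dW p
  have hTB : HasDerivAt (fun t => W1 (p.1, t)) (pdt W1 p) p.2 := hasDerivAt_pdt dW1 p
  have hTx := ((hTB.div (hTA.pow 3) (pow_ne_zero 3 (hVxx p))).sub
      ((hasDerivAt_const p.2 c2).div hTA (hVxx p))).sub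
    (hasDerivAt_const p.2 (c1 * p.1))
  have hT : pdt (fun q => W1 q / W q ^ 3 - c2 / W q - c1 * q.1) p
      = (pdt W1 p * W p ^ 3 - W1 p * (((3:ℕ):ℝ) * W p ^ (3-1) * pdt W p)) / (W p ^ 3) ^ 2
        - (0 * W p - c2 * pdt W p) / W p ^ 2 - 0 := hTx.deriv
  rw [hT, funext L1, L2, hpdtW p, hpdtW1 p]
  have hne : W p ≠ 0 := hVxx p
  push_cast
  field_simp
  ring
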